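/- Let K be a field and ν a valuation on K[x]. If Q ∈ K[x] is a key polynomial for ν, then the Q-truncation ν_Q is a valuation on K[x]. -/

import Mathlib

open Polynomial Finset

/-- A valuation on a commutative ring `R` with values in `Γ ∪ {∞}`. -/
def IsVal {R : Type*} [CommRing R] {Γ : Type*} [AddCommGroup Γ] [LinearOrder Γ] [IsOrderedAddMonoid Γ]
    (v : R → WithTop Γ) : Prop :=
  (∀ a b, v (a * b) = v a + v b) ∧
  (∀ a b, min (v a) (v b) ≤ v (a + b)) ∧
  v 1 = 0 ∧ v 0 = ⊤

/-- The `i`-th coefficient of the `q`-expansion of `f`. -/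
noncomputable def qCoeff {K : Type*} [Field K] (q f : K[X]) (i : ℕ) : K[X] :=
  (f /ₘ q ^ i) %ₘ q

/-- The `q`-truncation `ν_q` of a valuation `ν` on `K[x]`. -/
noncomputable def trunc {K : Type*} [Field K] {Γ : Type*} [AddCommGroup Γ] [LinearOrder Γ] [IsOrderedAddMonoid Γ]
    (v : K[X] → WithTop Γ) (q : K[X]) (f : K[X]) : WithTop Γ :=
  (Finset.range (f.natDegree + 1)).inf fun i => v (qCoeff q f i * q ^ i)

/-- The quantity `(ν(f) - ν(∂_b f))/b`, an element of `Γ ∪ {±∞}`. -/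
noncomputable def epsAt {K : Type*} [Field K] {Γ : Type*} [AddCommGroup Γ] [LinearOrder Γ] [IsOrderedAddMonoid Γ]
    [Module ℚ Γ] (v : K[X] → WithTop Γ) (f : K[X]) (b : ℕ) : WithBot (WithTop Γ) :=
  if h : v (hasseDeriv b f) = ⊤ then ⊥
  else (((v f).map fun c => (b : ℚ)⁻¹ • (c - (v (hasseDeriv b f)).untop h) : WithTop Γ) :
    WithBot (WithTop Γ))

/-- `ε(f) = max_b (ν(f) - ν(∂_b f))/b` over positive integers `b`. -/
noncomputable def eps {K : Type*} [Field K] {Γ : Type*} [AddCommGroup Γ] [LinearOrder Γ] [IsOrderedAddMonoid Γ]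
    [Module ℚ Γ] (v : K[X] → WithTop Γ) (f : K[X]) : WithBot (WithTop Γ) :=
  (Finset.Icc 1 f.natDegree).sup (epsAt v f)

/-- A (Spivakovsky) key polynomial for `ν`. -/
def IsKeyPoly {K : Type*} [Field K] {Γ : Type*} [AddCommGroup Γ] [LinearOrder Γ] [IsOrderedAddMonoid Γ]
    [Module ℚ Γ] (v : K[X] → WithTop Γ) (Q : K[X]) : Prop :=
  Q.Monic ∧ ∀ f : K[X], eps v Q ≤ eps v f → Q.degree ≤ f.degree

/-- `f` and `g` have the same initial form in the graded algebra of `ν`. -/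
def EquivIn {K : Type*} [Field K] {Γ : Type*} [AddCommGroup Γ] [LinearOrder Γ] [IsOrderedAddMonoid Γ]
    (v : K[X] → WithTop Γ) (f g : K[X]) : Prop :=
  v f = v g ∧ (v f < v (f - g) ∨ v f = ⊤)

/-- `g` ν-divides `f`. -/
def DvdIn {K : Type*} [Field K] {Γ : Type*} [AddCommGroup Γ] [LinearOrder Γ] [IsOrderedAddMonoid Γ]
    (v : K[X] → WithTop Γ) (g f : K[X]) : Prop :=
  ∃ h : K[X], EquivIn v f (g * h)

/-- A MacLane–Vaquié key polynomial for `ν`. -/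
def IsMVKeyPoly {K : Type*} [Field K] {Γ : Type*} [AddCommGroup Γ] [LinearOrder Γ] [IsOrderedAddMonoid Γ]
    (v : K[X] → WithTop Γ) (φ : K[X]) : Prop :=
  φ.Monic ∧
  (∀ f g : K[X], DvdIn v φ (f * g) → DvdIn v φ f ∨ DvdIn v φ g) ∧
  (∀ f : K[X], DvdIn v φ f → φ.degree ≤ f.degree)

/-- `α(Q)`: the minimal degree of a polynomial on which `ν_Q` differs from `ν`. -/
noncomputable def alphaDeg {K : Type*} [Field K] {Γ : Type*} [AddCommGroup Γ] [LinearOrder Γ] [IsOrderedAddMonoid Γ]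
    (v : K[X] → WithTop Γ) (Q : K[X]) : ℕ :=
  sInf {d | ∃ f : K[X], f.natDegree = d ∧ trunc v Q f < v f}

/-- `Ψ(Q)`: monic polynomials of degree `α(Q)` with `ν_Q(f) < ν(f)`. -/
def Psi {K : Type*} [Field K] {Γ : Type*} [AddCommGroup Γ] [LinearOrder Γ] [IsOrderedAddMonoid Γ]
    (v : K[X] → WithTop Γ) (Q : K[X]) : Set K[X] :=
  {f | f.Monic ∧ trunc v Q f < v f ∧ f.natDegree = alphaDeg v Q}

section Aux
variable {K : Type*} [Field K] {Γ : Type*} [AddCommGroup Γ] [LinearOrder Γ] [IsOrderedAddMonoid Γ]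
variable {v : K[X] → WithTop Γ}

theorem IsVal.vneg (hv : IsVal v) (a : K[X]) : v (-a) = v a := by
  obtain ⟨hm, _, h1, _⟩ := hv
  have hn1 : v (-1 : K[X]) = 0 := by
    have := hm (-1) (-1); rw [neg_one_mul, neg_neg, h1] at this
    rcases (eq_or_ne (v (-1 : K[X])) ⊤) with h | h
    · rw [h] at this; simp at this
    · lift v (-1 : K[X]) to Γ using h with x hx
      have hxx : x + x = 0 := by exact_mod_cast this.symm
      have : x = 0 := by
        rcases lt_trichotomy x 0 with h' | h' | h'
        · have := add_lt_add h' h'; rw [hxx, add_zero] at this; exact absurd this (lt_irrefl _).elim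
        · exact h'
        · have := add_lt_add h' h'; rw [hxx, add_zero] at this; exact absurd this (lt_irrefl 0)
      simp [this]
  calc v (-a) = v ((-1) * a) := by ring_nf
    _ = 0 + v a := by rw [hm, hn1]
    _ = v a := by rw [zero_add]

theorem IsVal.vadd' (hv : IsVal v) {a b : K[X]} {t : WithTop Γ} (ha : t ≤ v a) (hb : t ≤ v b) :
    t ≤ v (a + b) := le_trans (le_min ha hb) (hv.2.1 a b)

theorem IsVal.v_add_eq (hv : IsVal v) {a b : K[X]} (h : v b > v a) : v (a + b) = v a := by
  refine le_antisymm ?_ (hv.vadd' le_rfl h.le)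
  by_contra hlt
  push_neg at hlt
  have h2 : a = a + b + (-b) := by ring
  have : v a < v a := by
    calc v a = v (a + b + (-b)) := by rw [← h2]
    _ ≥ min (v (a+b)) (v (-b)) := hv.2.1 _ _
    _ = min (v (a+b)) (v b) := by rw [hv.vneg]
    _ > v a := lt_min hlt h
  exact lt_irrefl _ this

theorem IsVal.v_sum_ge (hv : IsVal v) {ι : Type*} {s : Finset ι} {F : ι → K[X]}
    {t : WithTop Γ} (h : ∀ i ∈ s, t ≤ v (F i)) : t ≤ v (∑ i ∈ s, F i) := by
  classical
  induction s using Finset.induction with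
  | empty => simp [hv.2.2.2]
  | insert _ _ hx ih =>
    rw [Finset.sum_insert hx]
    exact hv.vadd' (h _ (Finset.mem_insert_self _ _))
      (ih fun i hi => h i (Finset.mem_insert_of_mem hi))

theorem IsVal.v_sum_gt (hv : IsVal v) {ι : Type*} {s : Finset ι} {F : ι → K[X]}
    {t : WithTop Γ} (ht : t ≠ ⊤) (h : ∀ i ∈ s, t < v (F i)) : t < v (∑ i ∈ s, F i) := by
  classical
  induction s using Finset.induction with
  | empty => simpa [hv.2.2.2] using lt_top_iff_ne_top.mpr ht
  | insert _ _ hx ih =>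
    rw [Finset.sum_insert hx]
    exact lt_of_lt_of_le (lt_min (h _ (Finset.mem_insert_self _ _))
      (ih fun i hi => h i (Finset.mem_insert_of_mem hi))) (hv.2.1 _ _)

/-- main ultrametric equality: one exact term plus strictly bigger rest -/
theorem IsVal.v_add_eq' (hv : IsVal v) {a b : K[X]} {t : WithTop Γ} (ha : v a = t)
    (hb : v b > t) : v (a + b) = t := by subst ha; exact hv.v_add_eq hb

theorem IsVal.vC_ne_top (hv : IsVal v) {c : K} (hc : c ≠ 0) : v (C c) ≠ ⊤ := by
  intro h
  have := hv.1 (C c) (C c⁻¹)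
  rw [← C_mul, mul_inv_cancel₀ hc, C_1, hv.2.2.1, h, top_add] at this
  exact (by simp : (0:WithTop Γ) ≠ ⊤) this

end Aux

section Exp
variable {K : Type*} [Field K] {Q : K[X]} (hm : Q.Monic) (hd : 1 ≤ Q.natDegree)

include hm

theorem degree_pow_Q (k : ℕ) : (Q ^ k).degree = ((k * Q.natDegree : ℕ) : WithBot ℕ) := by
  rw [degree_pow, degree_eq_natDegree hm.ne_zero]
  induction k with
  | zero => simp
  | succ n ih => rw [succ_nsmul, ih, add_mul, one_mul, Nat.cast_add]

include hd

theorem degQ_pos : (0 : WithBot ℕ) < Q.degree := by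
  rw [degree_eq_natDegree hm.ne_zero]
  exact_mod_cast Nat.lt_of_lt_of_le Nat.zero_lt_one hd

/-- degree f < degree Q^N when natDegree f < N -/
theorem degree_lt_pow {f : K[X]} {N : ℕ} (hN : f.natDegree < N) :
    f.degree < (Q ^ N).degree := by
  rw [degree_pow_Q hm]
  rcases eq_or_ne f 0 with rfl | hf
  · rw [degree_zero]; exact_mod_cast WithBot.bot_lt_coe (N * Q.natDegree)
  · rw [degree_eq_natDegree hf]
    exact_mod_cast Nat.lt_of_lt_of_le hN (Nat.le_mul_of_pos_right _ hd)

omit hd in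
theorem degree_qCoeff_lt (f : K[X]) (i : ℕ) : (qCoeff Q f i).degree < Q.degree :=
  degree_modByMonic_lt _ hm

/-- division by a power, one step -/
theorem divByMonic_pow_succ (f : K[X]) (k : ℕ) : f /ₘ Q ^ (k + 1) = (f /ₘ Q) /ₘ Q ^ k := by
  have h1 := modByMonic_add_div f Q
  have h2 := modByMonic_add_div (f /ₘ Q) (Q ^ k)
  have key : (f /ₘ Q) %ₘ Q ^ k * Q + f %ₘ Q + Q ^ (k+1) * ((f /ₘ Q) /ₘ Q ^ k) = f := by
    calc (f /ₘ Q) %ₘ Q ^ k * Q + f %ₘ Q + Q ^ (k+1) * ((f /ₘ Q) /ₘ Q ^ k)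
        = f %ₘ Q + Q * ((f /ₘ Q) %ₘ Q ^ k + Q ^ k * ((f /ₘ Q) /ₘ Q ^ k)) := by ring
      _ = f %ₘ Q + Q * (f /ₘ Q) := by rw [h2]
      _ = f := h1
  have hdeg : ((f /ₘ Q) %ₘ Q ^ k * Q + f %ₘ Q).degree < (Q ^ (k+1)).degree := by
    rw [degree_pow_Q hm]
    refine lt_of_le_of_lt (degree_add_le _ _) (max_lt ?_ ?_)
    · rcases eq_or_ne ((f /ₘ Q) %ₘ Q ^ k) 0 with h | h
      · rw [h, zero_mul, degree_zero]; exact_mod_cast WithBot.bot_lt_coe ((k+1) * Q.natDegree)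
      · rw [degree_mul, degree_eq_natDegree hm.ne_zero, degree_eq_natDegree h]
        have := degree_modByMonic_lt (f /ₘ Q) (hm.pow k)
        rw [degree_pow_Q hm, degree_eq_natDegree h] at this
        have hlt : ((f /ₘ Q) %ₘ Q ^ k).natDegree < k * Q.natDegree := by exact_mod_cast this
        have : ((f /ₘ Q) %ₘ Q ^ k).natDegree + Q.natDegree < (k+1) * Q.natDegree := by
          rw [add_mul, one_mul]; omega
        exact_mod_cast this
    · refine lt_of_lt_of_le (degree_modByMonic_lt f hm) ?_
      rw [degree_eq_natDegree hm.ne_zero]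
      have : Q.natDegree ≤ (k+1) * Q.natDegree := Nat.le_mul_of_pos_left _ (Nat.succ_pos k)
      exact_mod_cast this
  exact (div_modByMonic_unique _ _ (hm.pow (k+1)) ⟨key, hdeg⟩).1

theorem qCoeff_succ (f : K[X]) (k : ℕ) : qCoeff Q f (k + 1) = qCoeff Q (f /ₘ Q) k := by
  unfold qCoeff; rw [divByMonic_pow_succ hm hd]

omit hd in
theorem qCoeff_zero' (f : K[X]) : qCoeff Q f 0 = f %ₘ Q := by
  unfold qCoeff; rw [pow_zero, divByMonic_one]

omit hm hd in
theorem qCoeff_zero_poly (i : ℕ) : qCoeff Q (0 : K[X]) i = 0 := by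
  unfold qCoeff; rw [zero_divByMonic, zero_modByMonic]

theorem qCoeff_eq_zero (f : K[X]) {i : ℕ} (h : f.natDegree < i) : qCoeff Q f i = 0 := by
  unfold qCoeff
  rw [(divByMonic_eq_zero_iff (hm.pow i)).2 (degree_lt_pow hm hd h), zero_modByMonic]

/-- existence of expansions -/
theorem qCoeff_sum (f : K[X]) {N : ℕ} (hN : f.natDegree < N) :
    f = ∑ k ∈ range N, qCoeff Q f k * Q ^ k := by
  have key : ∀ (N : ℕ) (f : K[X]),
      f = (∑ k ∈ range N, qCoeff Q f k * Q ^ k) + (f /ₘ Q ^ N) * Q ^ N := by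
    intro N
    induction N with
    | zero => intro f; simp [divByMonic_one]
    | succ n ih =>
      intro f
      have h0 := modByMonic_add_div f Q
      calc f = f %ₘ Q + Q * (f /ₘ Q) := h0.symm
        _ = f %ₘ Q + ((∑ k ∈ range n, qCoeff Q (f /ₘ Q) k * Q ^ k)
              + ((f /ₘ Q) /ₘ Q ^ n) * Q ^ n) * Q := by rw [← ih (f /ₘ Q)]; ring
        _ = (qCoeff Q f 0 * Q ^ 0 + ∑ k ∈ range n, qCoeff Q f (k+1) * Q ^ (k+1))
              + (f /ₘ Q ^ (n+1)) * Q ^ (n+1) := by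
            rw [qCoeff_zero' hm, divByMonic_pow_succ hm hd]
            have hc : ∀ k ∈ range n, qCoeff Q f (k+1) * Q ^ (k+1)
                = (qCoeff Q (f /ₘ Q) k * Q ^ k) * Q := by
              intro k _; rw [qCoeff_succ hm hd]; ring
            rw [Finset.sum_congr rfl hc, ← Finset.sum_mul]
            ring
        _ = (∑ k ∈ range (n+1), qCoeff Q f k * Q ^ k) + (f /ₘ Q ^ (n+1)) * Q ^ (n+1) := by
            rw [Finset.sum_range_succ']; ring
  have hz := key N f
  rwa [(divByMonic_eq_zero_iff (hm.pow N)).2 (degree_lt_pow hm hd hN), zero_mul,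
    add_zero] at hz

/-- uniqueness of expansions -/
theorem qCoeff_unique :
    ∀ (N : ℕ) (a : ℕ → K[X]), (∀ k, (a k).degree < Q.degree) →
      ∀ (f : K[X]), f = (∑ k ∈ range N, a k * Q ^ k) →
      ∀ k, qCoeff Q f k = if k < N then a k else 0 := by
  intro N
  induction N with
  | zero => intro a ha f hf k; simp at hf; simp [hf, qCoeff_zero_poly]
  | succ n ih =>
    intro a ha f hf k
    set g : K[X] := ∑ k ∈ range n, a (k+1) * Q ^ k with hg
    have hfg : f = a 0 + Q * g := by
      rw [hf, Finset.sum_range_succ']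
      have hc : ∀ k ∈ range n, a (k+1) * Q ^ (k+1) = Q * (a (k+1) * Q ^ k) :=
        fun k _ => by ring
      rw [Finset.sum_congr rfl hc, ← Finset.mul_sum, pow_zero, mul_one, hg]
      ring
    have hdiv : f /ₘ Q = g ∧ f %ₘ Q = a 0 :=
      div_modByMonic_unique g (a 0) hm ⟨by rw [hfg, add_comm], ha 0⟩
    rcases k with _ | k
    · rw [qCoeff_zero' hm, hdiv.2]; simp
    · rw [qCoeff_succ hm hd, hdiv.1, ih (fun k => a (k+1)) (fun k => ha (k+1)) g rfl k]
      simp [Nat.succ_lt_succ_iff]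

end Exp

section Eps
variable {K : Type*} [Field K] {Γ : Type*} [AddCommGroup Γ] [LinearOrder Γ] [IsOrderedAddMonoid Γ] [Module ℚ Γ]
variable {v : K[X] → WithTop Γ} {Q : K[X]}

-- from part a (assumed available): hv.vC_ne_top
theorem IsVal.vC_ne_top' (hv : IsVal v) {c : K} (hc : c ≠ 0) : v (C c) ≠ ⊤ := by
  intro h
  have := hv.1 (C c) (C c⁻¹)
  rw [← C_mul, mul_inv_cancel₀ hc, C_1, hv.2.2.1, h, top_add] at this
  exact (by simp : (0:WithTop Γ) ≠ ⊤) this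

theorem eps_zero_poly : eps v (0 : K[X]) = ⊥ := by
  simp [eps, natDegree_zero]

theorem IsKeyPoly.one_le_natDegree (hQ : IsKeyPoly v Q) : 1 ≤ Q.natDegree := by
  by_contra h
  push_neg at h
  have h0 : Q.natDegree = 0 := by omega
  have hQ1 : Q = 1 := eq_one_of_monic_natDegree_zero hQ.1 h0
  have hb : eps v Q = ⊥ := by simp [eps, h0]
  have := hQ.2 0 (by rw [hb, eps_zero_poly])
  rw [degree_zero, hQ1, degree_one] at this
  exact (by simp : ¬ ((0 : WithBot ℕ) ≤ ⊥)) this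

theorem IsKeyPoly.eps_ne_bot (hQ : IsKeyPoly v Q) : eps v Q ≠ ⊥ := by
  intro hb
  have := hQ.2 0 (by rw [hb, eps_zero_poly])
  rw [degree_zero, degree_eq_natDegree hQ.1.ne_zero] at this
  simp at this

/-- if the degree-b Hasse derivative has finite value and `v f = ⊤`, `eps` is `coe top`  -/
theorem v_ne_top_of_degree_lt (hv : IsVal v) (hQ : IsKeyPoly v Q) {f : K[X]}
    (hf : f ≠ 0) (hdf : f.degree < Q.degree) : v f ≠ ⊤ := by
  intro htop
  rcases Nat.eq_zero_or_pos f.natDegree with h0 | hpos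
  · obtain ⟨c, rfl⟩ := natDegree_eq_zero.mp h0
    exact hv.vC_ne_top' (by simpa using hf) htop
  · set b := f.natDegree with hb
    have hder : hasseDeriv b f = C (f.coeff b) := by
      have hle : (hasseDeriv b f).natDegree = 0 :=
        Nat.le_antisymm (by have := natDegree_hasseDeriv_le f b; omega) (Nat.zero_le _)
      obtain ⟨c, hc⟩ := natDegree_eq_zero.mp hle
      have h2 := hasseDeriv_coeff b f 0
      rw [← hc, coeff_C_zero, zero_add, Nat.choose_self] at h2
      rw [← hc]
      congr 1
      simpa using h2
    have hcb : f.coeff b ≠ 0 := by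
      rw [hb]; exact leadingCoeff_ne_zero.mpr hf
    have hvd : v (hasseDeriv b f) ≠ ⊤ := by rw [hder]; exact hv.vC_ne_top' hcb
    have heps : epsAt v f b = ((⊤ : WithTop Γ) : WithBot (WithTop Γ)) := by
      rw [epsAt, dif_neg hvd, htop, WithTop.map_top]
    have hle2 : eps v Q ≤ eps v f := by
      have hmem : b ∈ Finset.Icc 1 f.natDegree := by
        simp only [Finset.mem_Icc]; omega
      have h3 := Finset.le_sup (f := epsAt v f) hmem
      rw [heps] at h3
      refine le_trans ?_ h3
      cases h4 : eps v Q with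
      | bot => exact bot_le
      | coe y => exact WithBot.coe_le_coe.mpr le_top
    exact absurd (hQ.2 f hle2) (not_le.mpr hdf)

theorem nsmul_conj {b : ℕ} (hb : 1 ≤ b) (x : Γ) : b • ((b:ℚ)⁻¹ • x) = x := by
  rw [← Nat.cast_smul_eq_nsmul ℚ, smul_smul, mul_inv_cancel₀, one_smul]
  exact_mod_cast Nat.one_le_iff_ne_zero.mp hb

theorem inv_smul_le {b : ℕ} (hb : 1 ≤ b) {x e : Γ} (h : (b:ℚ)⁻¹ • x ≤ e) : x ≤ b • e := by
  have := nsmul_le_nsmul_right h b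
  rwa [nsmul_conj hb] at this

theorem inv_smul_lt {b : ℕ} (hb : 1 ≤ b) {x e : Γ} (h : (b:ℚ)⁻¹ • x < e) : x < b • e := by
  have := nsmul_lt_nsmul_right (Nat.one_le_iff_ne_zero.mp hb) h
  rwa [nsmul_conj hb] at this

theorem epsAt_eq {f : K[X]} {b : ℕ} {γ δ : Γ} (hγ : v f = ↑γ)
    (h : v (hasseDeriv b f) = ↑δ) :
    epsAt v f b = ((((b:ℚ)⁻¹ • (γ - δ) : Γ) : WithTop Γ) : WithBot (WithTop Γ)) := by
  have hne : v (hasseDeriv b f) ≠ ⊤ := by rw [h]; exact WithTop.coe_ne_top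
  rw [epsAt, dif_neg hne, hγ, WithTop.map_coe]
  have hu : (v (hasseDeriv b f)).untop hne = δ := by
    apply WithTop.coe_injective
    rw [WithTop.coe_untop, h]
  rw [hu]

/-- The main data extracted from a key polynomial, when `v Q` is finite. -/
theorem exists_b0 (hv : IsVal v) (hQ : IsKeyPoly v Q) (htop : v Q ≠ ⊤) :
    ∃ (b₀ : ℕ) (e : Γ), 1 ≤ b₀ ∧
      v (hasseDeriv b₀ Q) + ((b₀ • e : Γ) : WithTop Γ) = v Q ∧
      (∀ b, 1 ≤ b → v Q ≤ v (hasseDeriv b Q) + ((b • e : Γ) : WithTop Γ)) ∧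
      (∀ f, f ≠ 0 → f.degree < Q.degree → ∀ b, 1 ≤ b →
        v f < v (hasseDeriv b f) + ((b • e : Γ) : WithTop Γ)) := by
  obtain ⟨γQ, hγQ⟩ := WithTop.ne_top_iff_exists.mp htop
  have hne : (Finset.Icc 1 Q.natDegree).Nonempty :=
    ⟨1, by simp [hQ.one_le_natDegree]⟩
  obtain ⟨b₀, hb₀mem, hb₀⟩ := Finset.exists_mem_eq_sup _ hne (epsAt v Q)
  rw [Finset.mem_Icc] at hb₀mem
  have hb₀1 : 1 ≤ b₀ := hb₀mem.1
  have hEQ : eps v Q = epsAt v Q b₀ := hb₀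
  have hdQtop : v (hasseDeriv b₀ Q) ≠ ⊤ := by
    intro h
    exact hQ.eps_ne_bot (by rw [hEQ, epsAt, dif_pos h])
  obtain ⟨δ₀, hδ₀⟩ := WithTop.ne_top_iff_exists.mp hdQtop
  set e : Γ := (b₀:ℚ)⁻¹ • (γQ - δ₀) with he
  have hEe : eps v Q = ((e : WithTop Γ) : WithBot (WithTop Γ)) := by
    rw [hEQ, epsAt_eq hγQ.symm hδ₀.symm]
  have hb₀e : b₀ • e = γQ - δ₀ := nsmul_conj hb₀1 _
  refine ⟨b₀, e, hb₀1, ?_, ?_, ?_⟩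
  · rw [← hδ₀, ← hγQ, ← WithTop.coe_add, hb₀e]
    congr 1
    abel
  · intro b hb
    by_cases hbt : v (hasseDeriv b Q) = ⊤
    · rw [hbt, top_add]; exact le_top
    obtain ⟨δ, hδ⟩ := WithTop.ne_top_iff_exists.mp hbt
    have hble : b ≤ Q.natDegree := by
      by_contra hgt
      push_neg at hgt
      rw [hasseDeriv_eq_zero_of_lt_natDegree Q b hgt, hv.2.2.2] at hbt
      exact hbt rfl
    have hmem : b ∈ Finset.Icc 1 Q.natDegree := Finset.mem_Icc.mpr ⟨hb, hble⟩
    have hle : epsAt v Q b ≤ eps v Q := Finset.le_sup hmem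
    rw [hEe, epsAt_eq hγQ.symm hδ.symm] at hle
    have h1 : (b:ℚ)⁻¹ • (γQ - δ) ≤ e := by exact_mod_cast hle
    have h2 : γQ - δ ≤ b • e := inv_smul_le hb h1
    rw [← hγQ, ← hδ, ← WithTop.coe_add, WithTop.coe_le_coe]
    have := add_le_add_left h2 δ
    rwa [sub_add_cancel, add_comm] at this
  · intro f hf hdf b hb
    have hvf : v f ≠ ⊤ := v_ne_top_of_degree_lt hv hQ hf hdf
    obtain ⟨γf, hγf⟩ := WithTop.ne_top_iff_exists.mp hvf
    by_cases hbt : v (hasseDeriv b f) = ⊤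
    · rw [hbt, top_add, ← hγf]; exact WithTop.coe_lt_top _
    obtain ⟨δ, hδ⟩ := WithTop.ne_top_iff_exists.mp hbt
    have hble : b ≤ f.natDegree := by
      by_contra hgt
      push_neg at hgt
      rw [hasseDeriv_eq_zero_of_lt_natDegree f b hgt, hv.2.2.2] at hbt
      exact hbt rfl
    have hkey : eps v f < eps v Q := by
      rcases lt_or_ge (eps v f) (eps v Q) with h | h
      · exact h
      · exact absurd (hQ.2 f h) (not_le.mpr hdf)
    have hmem : b ∈ Finset.Icc 1 f.natDegree := Finset.mem_Icc.mpr ⟨hb, hble⟩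
    have hlt : epsAt v f b < ((e : WithTop Γ) : WithBot (WithTop Γ)) := by
      rw [← hEe]
      exact lt_of_le_of_lt (Finset.le_sup hmem) hkey
    rw [epsAt_eq hγf.symm hδ.symm] at hlt
    have h1 : (b:ℚ)⁻¹ • (γf - δ) < e := by exact_mod_cast hlt
    have h2 : γf - δ < b • e := inv_smul_lt hb h1
    rw [← hγf, ← hδ, ← WithTop.coe_add, WithTop.coe_lt_coe]
    have := add_lt_add_left h2 δ
    rwa [sub_add_cancel, add_comm] at this

end Eps

section Core
variable {K : Type*} [Field K] {Γ : Type*} [AddCommGroup Γ] [LinearOrder Γ] [IsOrderedAddMonoid Γ] [Module ℚ Γ]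
variable {v : K[X] → WithTop Γ} {Q : K[X]}

theorem IsVal.v_add_ge2 (hv : IsVal v) {a b : K[X]} {t c : WithTop Γ}
    (ha : t ≤ v a + c) (hb : t ≤ v b + c) : t ≤ v (a + b) + c := by
  rcases le_total (v a) (v b) with h | h
  · have h2 := hv.2.1 a b
    rw [min_eq_left h] at h2
    exact le_trans ha (add_le_add_left h2 c)
  · have h2 := hv.2.1 a b
    rw [min_eq_right h] at h2
    exact le_trans hb (add_le_add_left h2 c)

theorem IsVal.v_add_gt2 (hv : IsVal v) {a b : K[X]} {t c : WithTop Γ}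
    (ha : t < v a + c) (hb : t < v b + c) : t < v (a + b) + c := by
  rcases le_total (v a) (v b) with h | h
  · have h2 := hv.2.1 a b
    rw [min_eq_left h] at h2
    exact lt_of_lt_of_le ha (add_le_add_left h2 c)
  · have h2 := hv.2.1 a b
    rw [min_eq_right h] at h2
    exact lt_of_lt_of_le hb (add_le_add_left h2 c)

theorem IsVal.v_sum_gt2 (hv : IsVal v) {ι : Type*} {s : Finset ι} {F : ι → K[X]}
    {t c : WithTop Γ} (ht : t ≠ ⊤) (h : ∀ i ∈ s, t < v (F i) + c) :
    t < v (∑ i ∈ s, F i) + c := by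
  classical
  induction s using Finset.induction with
  | empty =>
    rw [Finset.sum_empty, hv.2.2.2, top_add]
    exact lt_top_iff_ne_top.mpr ht
  | insert _ _ hx ih =>
    rw [Finset.sum_insert hx]
    exact hv.v_add_gt2 (h _ (Finset.mem_insert_self _ _))
      (ih fun i hi => h i (Finset.mem_insert_of_mem hi))

theorem IsVal.v_sum_ge2 (hv : IsVal v) {ι : Type*} {s : Finset ι} {F : ι → K[X]}
    {t c : WithTop Γ} (h : ∀ i ∈ s, t ≤ v (F i) + c) :
    t ≤ v (∑ i ∈ s, F i) + c := by
  classical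
  induction s using Finset.induction with
  | empty => rw [Finset.sum_empty, hv.2.2.2, top_add]; exact le_top
  | insert _ _ hx ih =>
    rw [Finset.sum_insert hx]
    exact hv.v_add_ge2 (h _ (Finset.mem_insert_self _ _))
      (ih fun i hi => h i (Finset.mem_insert_of_mem hi))

/-- The core lemma: products of polynomials of degree `< deg Q` behave well under
division by a key polynomial `Q`. -/
theorem core (hv : IsVal v) (hQ : IsKeyPoly v Q) {a b : K[X]} (ha : a ≠ 0) (hb : b ≠ 0)
    (hda : a.degree < Q.degree) (hdb : b.degree < Q.degree) :
    v ((a * b) %ₘ Q) = v (a * b) ∧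
      ((a * b) /ₘ Q = 0 ∨ v (a * b) < v ((a * b) /ₘ Q * Q)) := by
  have hm : Q.Monic := hQ.1
  have hd : 1 ≤ Q.natDegree := hQ.one_le_natDegree
  set s := (a * b) /ₘ Q with hs
  set r := (a * b) %ₘ Q with hr
  have hsum : r + Q * s = a * b := modByMonic_add_div (a * b) Q
  have hvab : v (a * b) = v a + v b := hv.1 a b
  have hvat : v a ≠ ⊤ := v_ne_top_of_degree_lt hv hQ ha hda
  have hvbt : v b ≠ ⊤ := v_ne_top_of_degree_lt hv hQ hb hdb
  have hvabt : v (a * b) ≠ ⊤ := by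
    rw [hvab]; exact WithTop.add_ne_top.mpr ⟨hvat, hvbt⟩
  have hdegr : r.degree < Q.degree := degree_modByMonic_lt _ hm
  have main : s ≠ 0 → v r < v (Q * s) := by
    intro hs0
    by_contra hle
    push_neg at hle
    -- hle : v (Q * s) ≤ v r
    have hdegs : s.degree < Q.degree := by
      have h1 : s.natDegree = (a*b).natDegree - Q.natDegree := natDegree_divByMonic _ hm
      have h2 : (a*b).natDegree = a.natDegree + b.natDegree := natDegree_mul ha hb
      have h3 : a.natDegree < Q.natDegree := natDegree_lt_natDegree ha hda
      have h4 : b.natDegree < Q.natDegree := natDegree_lt_natDegree hb hdb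
      rw [degree_eq_natDegree hs0, degree_eq_natDegree hm.ne_zero]
      exact_mod_cast by omega
    have hvst : v s ≠ ⊤ := v_ne_top_of_degree_lt hv hQ hs0 hdegs
    rcases eq_or_ne (v Q) ⊤ with hQt | hQt
    · -- v Q = ⊤ case
      have hQs : v (Q * s) = ⊤ := by rw [hv.1, hQt, top_add]
      have hrt : v r = ⊤ := top_le_iff.mp (hQs ▸ hle)
      have hr0 : r = 0 := by
        by_contra hr0
        exact v_ne_top_of_degree_lt hv hQ hr0 hdegr hrt
      rw [hr0, zero_add] at hsum
      rw [← hsum] at hvabt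
      exact hvabt hQs
    · -- v Q finite: derivative argument
      obtain ⟨b₀, e, hb₀1, hexact, hDQ, hDF⟩ := exists_b0 hv hQ hQt
      set c : WithTop Γ := ((b₀ • e : Γ) : WithTop Γ) with hc
      have hct : c ≠ ⊤ := WithTop.coe_ne_top
      set w := v (Q * s) with hw
      have hwt : w ≠ ⊤ := by rw [hw, hv.1]; exact WithTop.add_ne_top.mpr ⟨hQt, hvst⟩
      -- Step A : v (∂_{b₀} (a*b)) + c = w
      have hsplit : hasseDeriv b₀ (a * b) =
          (hasseDeriv b₀ Q * s) +
            ((∑ p ∈ (Finset.HasAntidiagonal.antidiagonal b₀).erase (b₀, 0),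
                hasseDeriv p.1 Q * hasseDeriv p.2 s) + hasseDeriv b₀ r) := by
        have h1 : hasseDeriv b₀ (a*b) = hasseDeriv b₀ r + hasseDeriv b₀ (Q * s) := by
          rw [← map_add, hsum]
        have hmem : ((b₀, 0) : ℕ × ℕ) ∈ Finset.HasAntidiagonal.antidiagonal b₀ := by
          simp [Finset.HasAntidiagonal.mem_antidiagonal]
        have h2 := Finset.add_sum_erase _ 
          (fun p : ℕ × ℕ => hasseDeriv p.1 Q * hasseDeriv p.2 s) hmem
        have h2' : hasseDeriv b₀ Q * s
            + ∑ p ∈ (Finset.HasAntidiagonal.antidiagonal b₀).erase (b₀, 0),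
                hasseDeriv p.1 Q * hasseDeriv p.2 s
            = ∑ p ∈ Finset.HasAntidiagonal.antidiagonal b₀, hasseDeriv p.1 Q * hasseDeriv p.2 s := by
          simpa [hasseDeriv_zero'] using h2
        rw [h1, hasseDeriv_mul, ← h2']
        ring
      have hterm_exact : v (hasseDeriv b₀ Q * s) + c = w := by
        rw [hv.1, hw, hv.1]
        rw [add_right_comm, hexact]
      have hrest : w < v ((∑ p ∈ (Finset.HasAntidiagonal.antidiagonal b₀).erase (b₀, 0),
          hasseDeriv p.1 Q * hasseDeriv p.2 s) + hasseDeriv b₀ r) + c := by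
        apply hv.v_add_gt2
        · apply hv.v_sum_gt2 hwt
          intro p hp
          have hpab : p.1 + p.2 = b₀ := Finset.HasAntidiagonal.mem_antidiagonal.mp (Finset.mem_of_mem_erase hp)
          have hp2 : 1 ≤ p.2 := by
            rcases Nat.eq_zero_or_pos p.2 with h0 | h1
            · exfalso
              have : p = (b₀, 0) := by
                have : p.1 = b₀ := by omega
                exact Prod.ext this h0
              exact (Finset.ne_of_mem_erase hp) this
            · exact h1
          have hcsplit : c = ((p.1 • e : Γ) : WithTop Γ) + ((p.2 • e : Γ) : WithTop Γ) := by
            rw [hc, ← WithTop.coe_add, ← add_nsmul, hpab]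
          rw [hv.1, hcsplit, hw, hv.1]
          have hQpart : v Q ≤ v (hasseDeriv p.1 Q) + ((p.1 • e : Γ) : WithTop Γ) := by
            rcases Nat.eq_zero_or_pos p.1 with h0 | h1
            · rw [h0, hasseDeriv_zero', zero_smul, WithTop.coe_zero, add_zero]
            · exact hDQ p.1 h1
          have hspart : v s < v (hasseDeriv p.2 s) + ((p.2 • e : Γ) : WithTop Γ) :=
            hDF s hs0 hdegs p.2 hp2
          calc v Q + v s
              < (v (hasseDeriv p.1 Q) + ((p.1 • e : Γ) : WithTop Γ))
                + (v (hasseDeriv p.2 s) + ((p.2 • e : Γ) : WithTop Γ)) :=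
                WithTop.add_lt_add_of_le_of_lt hQt hQpart hspart
            _ = v (hasseDeriv p.1 Q) + v (hasseDeriv p.2 s)
                + (((p.1 • e : Γ) : WithTop Γ) + ((p.2 • e : Γ) : WithTop Γ)) := by abel
        · rcases eq_or_ne r 0 with hr0 | hr0
          · rw [hr0, map_zero, hv.2.2.2, top_add]
            exact lt_top_iff_ne_top.mpr hwt
          · calc w ≤ v r := hle
              _ < v (hasseDeriv b₀ r) + c := hDF r hr0 hdegr b₀ hb₀1
      have hstepA : v (hasseDeriv b₀ (a * b)) + c = w := by
        rw [hsplit]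
        have hxlt : v (hasseDeriv b₀ Q * s) <
            v ((∑ p ∈ (Finset.HasAntidiagonal.antidiagonal b₀).erase (b₀, 0),
              hasseDeriv p.1 Q * hasseDeriv p.2 s) + hasseDeriv b₀ r) := by
          rw [← WithTop.add_lt_add_iff_right hct, hterm_exact]
          exact hrest
        rw [hv.v_add_eq hxlt]
        exact hterm_exact
      -- Step B : v (a*b) < v (∂_{b₀} (a*b)) + c
      have hstepB : v (a * b) < v (hasseDeriv b₀ (a * b)) + c := by
        rw [hasseDeriv_mul]
        apply hv.v_sum_gt2 hvabt
        intro p hp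
        have hpab : p.1 + p.2 = b₀ := Finset.HasAntidiagonal.mem_antidiagonal.mp hp
        have hcsplit : c = ((p.1 • e : Γ) : WithTop Γ) + ((p.2 • e : Γ) : WithTop Γ) := by
          rw [hc, ← WithTop.coe_add, ← add_nsmul, hpab]
        rw [hcsplit]
        have hgoal : v a + v b < (v (hasseDeriv p.1 a) + ((p.1 • e : Γ) : WithTop Γ))
            + (v (hasseDeriv p.2 b) + ((p.2 • e : Γ) : WithTop Γ)) := by
          rcases Nat.eq_zero_or_pos p.1 with h0 | h1
          · have hp2 : 1 ≤ p.2 := by omega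
            rw [h0, hasseDeriv_zero', zero_smul, WithTop.coe_zero, add_zero]
            exact WithTop.add_lt_add_of_le_of_lt hvat le_rfl (hDF b hb hdb p.2 hp2)
          · rcases Nat.eq_zero_or_pos p.2 with h0' | h1'
            · rw [h0', hasseDeriv_zero', zero_smul, WithTop.coe_zero, add_zero]
              exact WithTop.add_lt_add_of_lt_of_le hvbt (hDF a ha hda p.1 h1) le_rfl
            · exact WithTop.add_lt_add_of_lt_of_le hvbt (hDF a ha hda p.1 h1)
                (le_of_lt (hDF b hb hdb p.2 h1'))
        calc v (a * b) = v a + v b := hvab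
          _ < _ := hgoal
          _ = v (hasseDeriv p.1 a * hasseDeriv p.2 b)
              + (((p.1 • e : Γ) : WithTop Γ) + ((p.2 • e : Γ) : WithTop Γ)) := by
              rw [hv.1]; abel
      -- contradiction
      have h1 : v (a * b) < w := by rw [← hstepA]; exact hstepB
      have h2 : w ≤ v (a * b) := by
        rw [← hsum]
        have := hv.2.1 r (Q * s)
        rw [min_eq_right hle] at this
        exact this
      exact absurd h1 (not_lt.mpr h2)
  rcases eq_or_ne s 0 with hs0 | hs0
  · rw [hs0, mul_zero, add_zero] at hsum
    rw [hsum]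
    exact ⟨rfl, Or.inl hs0⟩
  · have hlt := main hs0
    have hvr : v (a * b) = v r := by rw [← hsum]; exact hv.v_add_eq hlt
    refine ⟨hvr.symm, Or.inr ?_⟩
    rw [hvr, mul_comm s Q]
    exact hlt

end Core

section T

variable {K : Type*} [Field K] {Q : K[X]} (hm : Q.Monic)
include hm

theorem addDivByMonic (f g : K[X]) : (f + g) /ₘ Q = f /ₘ Q + g /ₘ Q := by
  nontriviality K
  refine (div_modByMonic_unique _ (f %ₘ Q + g %ₘ Q) hm ⟨?_, ?_⟩).1
  · have h1 := modByMonic_add_div f Q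
    have h2 := modByMonic_add_div g Q
    calc f %ₘ Q + g %ₘ Q + Q * (f /ₘ Q + g /ₘ Q)
        = (f %ₘ Q + Q * (f /ₘ Q)) + (g %ₘ Q + Q * (g /ₘ Q)) := by ring
      _ = f + g := by rw [h1, h2]
  · refine lt_of_le_of_lt (degree_add_le _ _) (max_lt ?_ ?_) <;>
      exact degree_modByMonic_lt _ hm

theorem sumModByMonic {ι : Type*} (s : Finset ι) (F : ι → K[X]) :
    (∑ i ∈ s, F i) %ₘ Q = ∑ i ∈ s, F i %ₘ Q := by
  classical
  induction s using Finset.induction with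
  | empty => simp [zero_modByMonic]
  | insert _ _ hx ih => rw [Finset.sum_insert hx, Finset.sum_insert hx, add_modByMonic, ih]

theorem sumDivByMonic {ι : Type*} (s : Finset ι) (F : ι → K[X]) :
    (∑ i ∈ s, F i) /ₘ Q = ∑ i ∈ s, F i /ₘ Q := by
  classical
  induction s using Finset.induction with
  | empty => simp [zero_divByMonic]
  | insert _ _ hx ih => rw [Finset.sum_insert hx, Finset.sum_insert hx, addDivByMonic hm, ih]

end T
section Trunc
variable {K : Type*} [Field K] {Γ : Type*} [AddCommGroup Γ] [LinearOrder Γ] [IsOrderedAddMonoid Γ] [Module ℚ Γ]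
variable {v : K[X] → WithTop Γ} {Q : K[X]}

theorem trunc_eq_inf (hv : IsVal v) (hm : Q.Monic) (hd : 1 ≤ Q.natDegree) (f : K[X])
    {N : ℕ} (hN : f.natDegree < N) :
    trunc v Q f = (range N).inf fun i => v (qCoeff Q f i * Q ^ i) := by
  refine le_antisymm (Finset.le_inf fun i hi => ?_) (Finset.inf_mono ?_)
  · rcases le_or_gt i f.natDegree with h | h
    · exact Finset.inf_le (Finset.mem_range.mpr (by omega))
    · rw [qCoeff_eq_zero hm hd f h, zero_mul, hv.2.2.2]
      exact le_top
  · intro i hi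
    rw [Finset.mem_range] at hi ⊢
    omega

theorem trunc_zero' (hv : IsVal v) : trunc v Q 0 = ⊤ := by
  rw [trunc]
  simp [qCoeff_zero_poly, hv.2.2.2]

theorem trunc_one' (hv : IsVal v) (hm : Q.Monic) (hd : 1 ≤ Q.natDegree) :
    trunc v Q 1 = 0 := by
  rw [trunc]
  have h1 : qCoeff Q (1 : K[X]) 0 = 1 := by
    rw [qCoeff_zero' hm]
    rw [modByMonic_eq_self_iff hm, degree_one]
    exact degQ_pos hm hd
  simp [h1, hv.2.2.1]

theorem trunc_le_v (hv : IsVal v) (hm : Q.Monic) (hd : 1 ≤ Q.natDegree) (f : K[X]) :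
    trunc v Q f ≤ v f := by
  conv_rhs => rw [qCoeff_sum hm hd f (Nat.lt_succ_self _)]
  apply hv.v_sum_ge
  intro i hi
  exact Finset.inf_le hi

theorem trunc_add' (hv : IsVal v) (hm : Q.Monic) (hd : 1 ≤ Q.natDegree) (f g : K[X]) :
    min (trunc v Q f) (trunc v Q g) ≤ trunc v Q (f + g) := by
  set N := max f.natDegree g.natDegree + 1 with hN
  have hfN : f.natDegree < N := by omega
  have hgN : g.natDegree < N := by omega
  have hfgN : (f + g).natDegree < N := by
    have := natDegree_add_le f g
    omega
  rw [trunc_eq_inf hv hm hd f hfN, trunc_eq_inf hv hm hd g hgN,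
    trunc_eq_inf hv hm hd (f+g) hfgN]
  apply Finset.le_inf
  intro i hi
  have hq : qCoeff Q (f + g) i = qCoeff Q f i + qCoeff Q g i := by
    unfold qCoeff
    rw [addDivByMonic (hm.pow i), add_modByMonic]
  rw [hq, add_mul]
  refine hv.vadd' ?_ ?_
  · exact le_trans (min_le_left _ _) (Finset.inf_le hi)
  · exact le_trans (min_le_right _ _) (Finset.inf_le hi)

end Trunc

section Mul
variable {K : Type*} [Field K] {Γ : Type*} [AddCommGroup Γ] [LinearOrder Γ] [IsOrderedAddMonoid Γ] [Module ℚ Γ]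
variable {v : K[X] → WithTop Γ} {Q : K[X]}

theorem trunc_mul (hv : IsVal v) (hQ : IsKeyPoly v Q) (f g : K[X]) :
    trunc v Q (f * g) = trunc v Q f + trunc v Q g := by
  classical
  have hm : Q.Monic := hQ.1
  have hd : 1 ≤ Q.natDegree := hQ.one_le_natDegree
  rcases eq_or_ne f 0 with rfl | hf
  · rw [zero_mul, trunc_zero' hv, top_add]
  rcases eq_or_ne g 0 with rfl | hg
  · rw [mul_zero, trunc_zero' hv, add_top]
  set Nf := f.natDegree with hNf
  set Ng := g.natDegree with hNg
  set M := Nf + Ng with hM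
  set Df : ℕ → K[X] := fun i => qCoeff Q f i with hDf
  set Dg : ℕ → K[X] := fun j => qCoeff Q g j with hDg
  set conv : ℕ → K[X] := fun k => ∑ p ∈ Finset.HasAntidiagonal.antidiagonal k, Df p.1 * Dg p.2 with hconv
  set ρ : ℕ → K[X] := fun k => conv k %ₘ Q with hρ
  set σ : ℕ → K[X] := fun k => conv k /ₘ Q with hσ
  set σp : ℕ → K[X] := fun k => if k = 0 then 0 else σ (k - 1) with hσp
  set A : ℕ → K[X] := fun k => ρ k + σp k with hA
  have hDf0 : ∀ i, Nf < i → Df i = 0 := fun i hi => qCoeff_eq_zero hm hd f hi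
  have hDg0 : ∀ j, Ng < j → Dg j = 0 := fun j hj => qCoeff_eq_zero hm hd g hj
  have hconv0 : ∀ k, M < k → conv k = 0 := by
    intro k hk
    apply Finset.sum_eq_zero
    intro p hp
    have hpk : p.1 + p.2 = k := Finset.HasAntidiagonal.mem_antidiagonal.mp hp
    rcases le_or_gt p.1 Nf with h1 | h1
    · rw [hDg0 p.2 (by omega), mul_zero]
    · rw [hDf0 p.1 h1, zero_mul]
  -- the representation
  have hrep : f * g = ∑ k ∈ Finset.range (M+2), A k * Q^k := by
    set Pf : Polynomial K[X] := ∑ i ∈ Finset.range (Nf+1), Polynomial.monomial i (Df i) with hPf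
    set Pg : Polynomial K[X] := ∑ j ∈ Finset.range (Ng+1), Polynomial.monomial j (Dg j) with hPg
    have hPfc : ∀ i, Pf.coeff i = Df i := by
      intro i
      rw [hPf, finset_sum_coeff]
      simp only [coeff_monomial]
      rw [Finset.sum_ite_eq' (Finset.range (Nf+1)) i Df]
      split_ifs with h
      · rfl
      · rw [Finset.mem_range] at h
        rw [hDf0 i (by omega)]
    have hPgc : ∀ j, Pg.coeff j = Dg j := by
      intro j
      rw [hPg, finset_sum_coeff]
      simp only [coeff_monomial]
      rw [Finset.sum_ite_eq' (Finset.range (Ng+1)) j Dg]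
      split_ifs with h
      · rfl
      · rw [Finset.mem_range] at h
        rw [hDg0 j (by omega)]
    have hevalPf : Pf.eval Q = f := by
      rw [hPf, eval_finset_sum]
      simp only [eval_monomial]
      exact (qCoeff_sum hm hd f (Nat.lt_succ_self _)).symm
    have hevalPg : Pg.eval Q = g := by
      rw [hPg, eval_finset_sum]
      simp only [eval_monomial]
      exact (qCoeff_sum hm hd g (Nat.lt_succ_self _)).symm
    have hcoeffmul : ∀ k, (Pf * Pg).coeff k = conv k := by
      intro k
      rw [coeff_mul]
      exact Finset.sum_congr rfl fun p _ => by rw [hPfc, hPgc]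
    have hdegP : (Pf * Pg).natDegree < M + 2 := by
      have hle : (Pf * Pg).natDegree ≤ M :=
        natDegree_le_iff_coeff_eq_zero.mpr fun N hN => by
          rw [hcoeffmul]; exact hconv0 N hN
      omega
    have hrep1 : f * g = ∑ k ∈ Finset.range (M+2), conv k * Q^k := by
      have hev := eval_eq_sum_range' hdegP Q
      rw [eval_mul, hevalPf, hevalPg] at hev
      rw [hev]
      exact Finset.sum_congr rfl fun k _ => by rw [hcoeffmul]
    rw [hrep1]
    have hsplitk : ∀ k ∈ Finset.range (M+2), conv k * Q^k = ρ k * Q^k + σ k * Q^(k+1) := by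
      intro k _
      conv_lhs => rw [← modByMonic_add_div (conv k) Q]
      rw [hρ, hσ]
      ring
    rw [Finset.sum_congr rfl hsplitk, Finset.sum_add_distrib]
    have h2 : ∀ k ∈ Finset.range (M+2), A k * Q^k = ρ k * Q^k + σp k * Q^k := by
      intro k _
      rw [hA]; ring
    rw [Finset.sum_congr rfl h2, Finset.sum_add_distrib]
    congr 1
    have hσM : σ (M+1) = 0 := by
      rw [hσ]
      simp only
      rw [hconv0 (M+1) (by omega), zero_divByMonic]
    rw [Finset.sum_range_succ (fun k => σ k * Q^(k+1)), hσM, zero_mul, add_zero]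
    rw [Finset.sum_range_succ' (fun k => σp k * Q^k) (M+1)]
    simp [hσp]
  have hdegA : ∀ k, (A k).degree < Q.degree := by
    have hQbot : Q.degree ≠ ⊥ := fun hb => hm.ne_zero (degree_eq_bot.mp hb)
    have hQQ : Q.degree + Q.degree = ((Q.natDegree + Q.natDegree : ℕ) : WithBot ℕ) := by
      rw [degree_eq_natDegree hm.ne_zero]
      norm_cast
    have hbotQQ : (⊥ : WithBot ℕ) < Q.degree + Q.degree := by
      rw [hQQ]; exact_mod_cast WithBot.bot_lt_coe _
    have hterm : ∀ p : ℕ × ℕ, (Df p.1 * Dg p.2).degree < Q.degree + Q.degree := by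
      intro p
      rcases eq_or_ne (Df p.1) 0 with h | h
      · rw [h, zero_mul, degree_zero]; exact hbotQQ
      rcases eq_or_ne (Dg p.2) 0 with h2 | h2
      · rw [h2, mul_zero, degree_zero]; exact hbotQQ
      · rw [degree_mul]
        exact WithBot.add_lt_add_of_lt_of_le (mt degree_eq_bot.mp h2) (degree_qCoeff_lt hm f p.1)
          (le_of_lt (degree_qCoeff_lt hm g p.2))
    have hconvdeg : ∀ k, (conv k).degree < Q.degree + Q.degree := by
      intro k'
      refine lt_of_le_of_lt (degree_sum_le _ _) ?_
      rw [Finset.sup_lt_iff hbotQQ]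
      intro p _
      exact hterm p
    have hρdeg : ∀ k, (ρ k).degree < Q.degree := fun k' => degree_modByMonic_lt _ hm
    have hσdeg : ∀ k', (σ k').degree < Q.degree := by
      intro k'
      rcases eq_or_ne (σ k') 0 with h | h
      · rw [h, degree_zero]
        exact bot_lt_iff_ne_bot.mpr hQbot
      · have hQσ : Q * σ k' = conv k' - ρ k' :=
          eq_sub_of_add_eq' (modByMonic_add_div (conv k') Q)
        have hlt : (Q * σ k').degree < Q.degree + Q.degree := by
          rw [hQσ]
          refine lt_of_le_of_lt (degree_sub_le _ _) (max_lt (hconvdeg k') ?_)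
          refine lt_of_lt_of_le (hρdeg k') (le_add_of_nonneg_left ?_)
          exact le_of_lt (degQ_pos hm hd)
        rw [degree_mul] at hlt
        exact (WithBot.add_lt_add_iff_left hQbot).mp hlt
    intro k
    rw [hA]
    refine lt_of_le_of_lt (degree_add_le _ _) (max_lt (hρdeg k) ?_)
    simp only [hσp]
    split_ifs with h
    · rw [degree_zero]; exact bot_lt_iff_ne_bot.mpr hQbot
    · exact hσdeg (k-1)
  have hqC : ∀ k, qCoeff Q (f*g) k = if k < M+2 then A k else 0 :=
    qCoeff_unique hm hd (M+2) A hdegA _ hrep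
  set Tf := trunc v Q f with hTf
  set Tg := trunc v Q g with hTg
  have hTfle : ∀ i, Tf ≤ v (Df i * Q^i) := by
    intro i
    rcases le_or_gt i Nf with h | h
    · exact Finset.inf_le (Finset.mem_range.mpr (by omega))
    · rw [hDf0 i h, zero_mul, hv.2.2.2]; exact le_top
  have hTgle : ∀ j, Tg ≤ v (Dg j * Q^j) := by
    intro j
    rcases le_or_gt j Ng with h | h
    · exact Finset.inf_le (Finset.mem_range.mpr (by omega))
    · rw [hDg0 j h, zero_mul, hv.2.2.2]; exact le_top
  -- value computations for a single pair
  have val1 : ∀ i j, Df i ≠ 0 → Dg j ≠ 0 →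
      v ((Df i * Dg j) %ₘ Q * Q ^ (i+j)) = v (Df i * Q^i) + v (Dg j * Q^j) := by
    intro i j hi hj
    have hcore := core hv hQ hi hj (degree_qCoeff_lt hm f i) (degree_qCoeff_lt hm g j)
    rw [hv.1 ((Df i * Dg j) %ₘ Q) (Q^(i+j)), hcore.1, hv.1 (Df i) (Dg j), pow_add,
      hv.1 (Q^i) (Q^j), hv.1 (Df i) (Q^i), hv.1 (Dg j) (Q^j)]
    abel
  have val2 : ∀ i j, Df i ≠ 0 → Dg j ≠ 0 → (Df i * Dg j) /ₘ Q ≠ 0 →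
      v (Df i * Q^i) + v (Dg j * Q^j) < v ((Df i * Dg j) /ₘ Q * Q ^ (i+j+1)) ∨
      v ((Df i * Dg j) /ₘ Q * Q ^ (i+j+1)) = ⊤ := by
    intro i j hi hj hdiv
    rcases eq_or_ne (v ((Df i * Dg j) /ₘ Q * Q ^ (i+j+1))) ⊤ with ht | ht
    · exact Or.inr ht
    refine Or.inl ?_
    have hcore := ((core hv hQ hi hj (degree_qCoeff_lt hm f i)
      (degree_qCoeff_lt hm g j)).2).resolve_left hdiv
    have hre : (Df i * Dg j) /ₘ Q * Q ^ (i+j+1) = ((Df i * Dg j) /ₘ Q * Q) * Q^(i+j) := by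
      ring
    have hQk : v (Q^(i+j)) ≠ ⊤ := by
      intro h
      apply ht
      rw [hre, hv.1, h, add_top]
    calc v (Df i * Q^i) + v (Dg j * Q^j)
        = v (Df i * Dg j) + v (Q^(i+j)) := by
          rw [hv.1 (Df i) (Q^i), hv.1 (Dg j) (Q^j), hv.1 (Df i) (Dg j), pow_add,
            hv.1 (Q^i) (Q^j)]
          abel
      _ < v ((Df i * Dg j) /ₘ Q * Q) + v (Q^(i+j)) := WithTop.add_lt_add_right hQk hcore
      _ = v ((Df i * Dg j) /ₘ Q * Q^(i+j+1)) := by rw [hre, hv.1 ((Df i * Dg j) /ₘ Q * Q) (Q^(i+j))]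
  -- sum decompositions
  have hρsum : ∀ k, ρ k * Q^k = ∑ p ∈ Finset.HasAntidiagonal.antidiagonal k, (Df p.1 * Dg p.2) %ₘ Q * Q^k := by
    intro k
    rw [hρ]
    simp only
    rw [hconv]
    simp only
    rw [sumModByMonic hm, Finset.sum_mul]
  have hσsum : ∀ k, k ≠ 0 →
      σp k * Q^k = ∑ p ∈ Finset.HasAntidiagonal.antidiagonal (k-1), (Df p.1 * Dg p.2) /ₘ Q * Q^k := by
    intro k hk0
    have hσpk : σp k = σ (k-1) := by simp only [hσp, if_neg hk0]
    rw [hσpk, hσ]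
    simp only
    rw [hconv]
    simp only
    rw [sumDivByMonic hm, Finset.sum_mul]
  -- lower bound for every index k
  have hlow : ∀ k, Tf + Tg ≤ v (A k * Q^k) := by
    intro k
    have hAk : A k * Q^k = ρ k * Q^k + σp k * Q^k := by rw [hA]; ring
    rw [hAk]
    apply hv.vadd'
    · rw [hρsum k]
      apply hv.v_sum_ge
      intro p hp
      have hpk := Finset.HasAntidiagonal.mem_antidiagonal.mp hp
      rcases eq_or_ne (Df p.1) 0 with h | h
      · rw [h, zero_mul, zero_modByMonic, zero_mul, hv.2.2.2]; exact le_top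
      rcases eq_or_ne (Dg p.2) 0 with h2 | h2
      · rw [h2, mul_zero, zero_modByMonic, zero_mul, hv.2.2.2]; exact le_top
      · rw [show k = p.1 + p.2 from hpk.symm, val1 p.1 p.2 h h2]
        exact add_le_add (hTfle p.1) (hTgle p.2)
    · rcases eq_or_ne k 0 with rfl | hk0
      · have hz : σp 0 * Q^(0:ℕ) = 0 := by simp [hσp]
        rw [hz, hv.2.2.2]; exact le_top
      · rw [hσsum k hk0]
        apply hv.v_sum_ge
        intro p hp
        have hpk := Finset.HasAntidiagonal.mem_antidiagonal.mp hp
        rcases eq_or_ne (Df p.1) 0 with h | h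
        · rw [h, zero_mul, zero_divByMonic, zero_mul, hv.2.2.2]; exact le_top
        rcases eq_or_ne (Dg p.2) 0 with h2 | h2
        · rw [h2, mul_zero, zero_divByMonic, zero_mul, hv.2.2.2]; exact le_top
        rcases eq_or_ne ((Df p.1 * Dg p.2) /ₘ Q) 0 with h3 | h3
        · rw [h3, zero_mul, hv.2.2.2]; exact le_top
        · have hkk : k = p.1 + p.2 + 1 := by omega
          rw [hkk]
          rcases val2 p.1 p.2 h h2 h3 with hlt | htop
          · exact le_trans (add_le_add (hTfle p.1) (hTgle p.2)) (le_of_lt hlt)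
          · rw [htop]; exact le_top
  have hge : Tf + Tg ≤ trunc v Q (f*g) := by
    have hfgN : (f*g).natDegree < M + 2 := by
      rw [natDegree_mul hf hg]; omega
    rw [trunc_eq_inf hv hm hd (f*g) hfgN]
    apply Finset.le_inf
    intro k hk
    rw [Finset.mem_range] at hk
    rw [hqC k, if_pos hk]
    exact hlow k
  rcases eq_or_ne (Tf + Tg) ⊤ with hT | hT
  · rw [hT] at hge ⊢
    exact top_le_iff.mp hge
  -- upper bound: minimal attaining indices
  have hTft : Tf ≠ ⊤ := fun h => hT (by rw [h, top_add])
  have hTgt : Tg ≠ ⊤ := fun h => hT (by rw [h, add_top])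
  have hSf : ((Finset.range (Nf+1)).filter (fun i => v (Df i * Q^i) = Tf)).Nonempty := by
    obtain ⟨i, hi, hieq⟩ := Finset.exists_mem_eq_inf (Finset.range (Nf+1))
      (by exact ⟨0, Finset.mem_range.mpr (by omega)⟩) (fun i => v (Df i * Q^i))
    exact ⟨i, Finset.mem_filter.mpr ⟨hi, hieq.symm⟩⟩
  have hSg : ((Finset.range (Ng+1)).filter (fun j => v (Dg j * Q^j) = Tg)).Nonempty := by
    obtain ⟨j, hj, hjeq⟩ := Finset.exists_mem_eq_inf (Finset.range (Ng+1))
      (by exact ⟨0, Finset.mem_range.mpr (by omega)⟩) (fun j => v (Dg j * Q^j))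
    exact ⟨j, Finset.mem_filter.mpr ⟨hj, hjeq.symm⟩⟩
  set i₀ := ((Finset.range (Nf+1)).filter (fun i => v (Df i * Q^i) = Tf)).min' hSf with hi₀
  set j₀ := ((Finset.range (Ng+1)).filter (fun j => v (Dg j * Q^j) = Tg)).min' hSg with hj₀
  have hi₀eq : v (Df i₀ * Q^i₀) = Tf :=
    (Finset.mem_filter.mp (Finset.min'_mem _ hSf)).2
  have hj₀eq : v (Dg j₀ * Q^j₀) = Tg :=
    (Finset.mem_filter.mp (Finset.min'_mem _ hSg)).2
  have hi₀le : i₀ ≤ Nf := by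
    have := (Finset.mem_filter.mp (Finset.min'_mem _ hSf)).1
    rw [Finset.mem_range] at this; omega
  have hj₀le : j₀ ≤ Ng := by
    have := (Finset.mem_filter.mp (Finset.min'_mem _ hSg)).1
    rw [Finset.mem_range] at this; omega
  have hi₀min : ∀ i, i < i₀ → Tf < v (Df i * Q^i) := by
    intro i hi
    rcases lt_or_eq_of_le (hTfle i) with h | h
    · exact h
    · exfalso
      have hmem : i ∈ (Finset.range (Nf+1)).filter (fun i => v (Df i * Q^i) = Tf) :=
        Finset.mem_filter.mpr ⟨Finset.mem_range.mpr (by omega), h.symm⟩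
      exact absurd (Finset.min'_le _ _ hmem) (by omega)
  have hj₀min : ∀ j, j < j₀ → Tg < v (Dg j * Q^j) := by
    intro j hj
    rcases lt_or_eq_of_le (hTgle j) with h | h
    · exact h
    · exfalso
      have hmem : j ∈ (Finset.range (Ng+1)).filter (fun j => v (Dg j * Q^j) = Tg) :=
        Finset.mem_filter.mpr ⟨Finset.mem_range.mpr (by omega), h.symm⟩
      exact absurd (Finset.min'_le _ _ hmem) (by omega)
  have hDfi₀ : Df i₀ ≠ 0 := by
    intro h
    rw [h, zero_mul, hv.2.2.2] at hi₀eq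
    exact hTft hi₀eq.symm
  have hDgj₀ : Dg j₀ ≠ 0 := by
    intro h
    rw [h, zero_mul, hv.2.2.2] at hj₀eq
    exact hTgt hj₀eq.symm
  set k₀ := i₀ + j₀ with hk₀
  have hexactA : v (A k₀ * Q^k₀) = Tf + Tg := by
    have hmem : ((i₀, j₀) : ℕ × ℕ) ∈ Finset.HasAntidiagonal.antidiagonal k₀ :=
      Finset.HasAntidiagonal.mem_antidiagonal.mpr rfl
    have h2 := Finset.add_sum_erase _ (fun p : ℕ × ℕ => (Df p.1 * Dg p.2) %ₘ Q * Q^k₀) hmem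
    have hsplitA : A k₀ * Q^k₀ = (Df i₀ * Dg j₀) %ₘ Q * Q^k₀ +
        ((∑ p ∈ (Finset.HasAntidiagonal.antidiagonal k₀).erase (i₀, j₀), (Df p.1 * Dg p.2) %ₘ Q * Q^k₀)
          + σp k₀ * Q^k₀) := by
      have hAk : A k₀ * Q^k₀ = ρ k₀ * Q^k₀ + σp k₀ * Q^k₀ := by rw [hA]; ring
      rw [hAk, hρsum k₀, ← h2]
      ring
    rw [hsplitA]
    apply hv.v_add_eq'
    · rw [show k₀ = i₀ + j₀ from rfl, val1 i₀ j₀ hDfi₀ hDgj₀, hi₀eq, hj₀eq]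
    · refine lt_of_lt_of_le (lt_min ?_ ?_) (hv.2.1 _ _)
      · apply hv.v_sum_gt hT
        intro p hp
        have hpk : p.1 + p.2 = k₀ := Finset.HasAntidiagonal.mem_antidiagonal.mp (Finset.mem_of_mem_erase hp)
        have hpne : p ≠ (i₀, j₀) := Finset.ne_of_mem_erase hp
        rcases eq_or_ne (Df p.1) 0 with h | h
        · rw [h, zero_mul, zero_modByMonic, zero_mul, hv.2.2.2]
          exact lt_top_iff_ne_top.mpr hT
        rcases eq_or_ne (Dg p.2) 0 with h2 | h2
        · rw [h2, mul_zero, zero_modByMonic, zero_mul, hv.2.2.2]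
          exact lt_top_iff_ne_top.mpr hT
        · rw [show k₀ = p.1 + p.2 from hpk.symm, val1 p.1 p.2 h h2]
          have hor : p.1 < i₀ ∨ p.2 < j₀ := by
            by_contra hc
            push_neg at hc
            have hp1 : p.1 = i₀ := by omega
            have hp2 : p.2 = j₀ := by omega
            exact hpne (Prod.ext hp1 hp2)
          rcases hor with h4 | h4
          · exact WithTop.add_lt_add_of_lt_of_le hTgt (hi₀min p.1 h4) (hTgle p.2)
          · exact WithTop.add_lt_add_of_le_of_lt hTft (hTfle p.1) (hj₀min p.2 h4)
      · rcases eq_or_ne k₀ 0 with hk0 | hk0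
        · have hz : σp k₀ * Q^k₀ = 0 := by rw [hk0]; simp [hσp]
          rw [hz, hv.2.2.2]
          exact lt_top_iff_ne_top.mpr hT
        · rw [hσsum k₀ hk0]
          apply hv.v_sum_gt hT
          intro p hp
          have hpk := Finset.HasAntidiagonal.mem_antidiagonal.mp hp
          rcases eq_or_ne (Df p.1) 0 with h | h
          · rw [h, zero_mul, zero_divByMonic, zero_mul, hv.2.2.2]
            exact lt_top_iff_ne_top.mpr hT
          rcases eq_or_ne (Dg p.2) 0 with h2 | h2
          · rw [h2, mul_zero, zero_divByMonic, zero_mul, hv.2.2.2]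
            exact lt_top_iff_ne_top.mpr hT
          rcases eq_or_ne ((Df p.1 * Dg p.2) /ₘ Q) 0 with h3 | h3
          · rw [h3, zero_mul, hv.2.2.2]
            exact lt_top_iff_ne_top.mpr hT
          · have hkk : k₀ = p.1 + p.2 + 1 := by omega
            rw [hkk]
            rcases val2 p.1 p.2 h h2 h3 with hlt | htop
            · exact lt_of_le_of_lt (add_le_add (hTfle p.1) (hTgle p.2)) hlt
            · rw [htop]
              exact lt_top_iff_ne_top.mpr hT
  have hle : trunc v Q (f*g) ≤ Tf + Tg := by
    have hfgN : (f*g).natDegree < M + 2 := by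
      rw [natDegree_mul hf hg]; omega
    rw [trunc_eq_inf hv hm hd (f*g) hfgN, ← hexactA]
    have hk₀mem : k₀ ∈ Finset.range (M+2) := Finset.mem_range.mpr (by omega)
    refine le_trans (Finset.inf_le hk₀mem) (le_of_eq ?_)
    rw [hqC k₀, if_pos (by omega : k₀ < M+2)]
  exact le_antisymm hle hge

end Mul

/-- **Proposition 2.6 of [f]**: if `Q` is a (Spivakovsky) key polynomial for `ν`,
then the `Q`-truncation `ν_Q` is a valuation on `K[x]`. -/
theorem trunc_isVal_of_isKeyPoly {K : Type*} [Field K]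
    {Γ : Type*} [AddCommGroup Γ] [LinearOrder Γ] [IsOrderedAddMonoid Γ] [Module ℚ Γ]
    (v : K[X] → WithTop Γ) (hv : IsVal v) (Q : K[X]) (hQ : IsKeyPoly v Q) :
    IsVal (trunc v Q) :=
  ⟨fun a b => trunc_mul hv hQ a b,
   fun a b => trunc_add' hv hQ.1 hQ.one_le_natDegree a b,
   trunc_one' hv hQ.1 hQ.one_le_natDegree,
   trunc_zero' hv⟩
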